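/- Let q be a prime power, k ≥ 1, and f ∈ 𝔽_q[t][x] a square-free polynomial with deg_x f ≤ k. For any prime P ∈ 𝔽_q[t] dividing the content of f (the gcd of the 𝔽_q[t]-coefficients of f), the number of residues a mod P² with f(a) ≡ 0 (mod P²) is at most k·q^{deg P}. -/

import Mathlib

open Polynomial

noncomputable instance (Fq : Type*) [Field Fq] : NormalizedGCDMonoid (Polynomial Fq) := by
  classical exact UniqueFactorizationMonoid.toNormalizedGCDMonoid _

/-- For `f ∈ 𝔽_q[t][x]` square-free with `deg_x f ≤ k`, and a monic irreducible
`P ∈ 𝔽_q[t]` dividing the content of `f`, the number of residues `a mod P²` with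
`f(a) ≡ 0 (mod P²)` is at most `k·q^{deg P}`. -/
theorem rho_le_of_dvd_content (Fq : Type*) [Field Fq] [Fintype Fq] (k : ℕ) (hk : 1 ≤ k)
    (f : Polynomial (Polynomial Fq)) (hf : Squarefree f) (hdeg : f.natDegree ≤ k)
    (P : Polynomial Fq) (hP : Irreducible P) (hPm : P.Monic) (hPc : P ∣ f.content) :
    {a : Polynomial Fq | a.degree < (P ^ 2).degree ∧ P ^ 2 ∣ f.eval a}.ncard ≤
      k * Fintype.card Fq ^ P.natDegree := by
  classical
  obtain ⟨g, hg⟩ : C P ∣ f := dvd_content_iff_C_dvd.mp hPc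
  have hP0 : P ≠ 0 := hP.ne_zero
  have hf0 : f ≠ 0 := hf.ne_zero
  have hdegP : 0 < P.degree := degree_pos_of_irreducible hP
  have hCPg : ¬ C P ∣ g := by
    rintro ⟨h, hh⟩
    refine hP.not_isUnit (isUnit_C.mp (hf (C P) ⟨h, ?_⟩))
    rw [hg, hh]; ring
  set I : Ideal (Polynomial Fq) := Ideal.span ({P} : Set (Polynomial Fq)) with hI
  haveI : I.IsMaximal := PrincipalIdealRing.isMaximal_of_irreducible hP
  letI : Field (Polynomial Fq ⧸ I) := Ideal.Quotient.field I
  set φ : Polynomial Fq →+* Polynomial Fq ⧸ I := Ideal.Quotient.mk I with hφ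
  set gK : Polynomial (Polynomial Fq ⧸ I) := g.map φ with hgK
  have hgK0 : gK ≠ 0 := by
    intro h
    refine hCPg ((C_dvd_iff_dvd_coeff P g).mpr fun n => ?_)
    have := congrArg (fun p => Polynomial.coeff p n) h
    simp only [hgK, hφ, hI, coeff_map, coeff_zero] at this
    exact (Ideal.Quotient.eq_zero_iff_dvd P (g.coeff n)).mp this
  have hroots : gK.roots.toFinset.card ≤ k := by
    calc gK.roots.toFinset.card ≤ Multiset.card gK.roots := gK.roots.toFinset_card_le
      _ ≤ gK.natDegree := card_roots' gK
      _ ≤ g.natDegree := natDegree_map_le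
      _ ≤ f.natDegree := natDegree_le_of_dvd ⟨C P, by rw [hg]; ring⟩ hf0
      _ ≤ k := hdeg
  set S : Set (Polynomial Fq) :=
    {a : Polynomial Fq | a.degree < (P ^ 2).degree ∧ P ^ 2 ∣ f.eval a} with hS
  have hdegP2 : (P ^ 2).degree = P.degree + P.degree := by rw [pow_two, degree_mul]
  -- the injection
  have hmem : ∀ a ∈ S, (φ a) ∈ gK.roots.toFinset := by
    rintro a ⟨_, hdvd⟩
    have h1 : P ∣ g.eval a := by
      have : P * P ∣ P * g.eval a := by
        rw [← pow_two]
        simpa only [hg, eval_mul, eval_C] using hdvd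
      exact (mul_dvd_mul_iff_left hP0).mp this
    have h2 : gK.eval (φ a) = 0 := by
      rw [hgK, eval_map, eval₂_hom]
      exact (Ideal.Quotient.eq_zero_iff_dvd P (g.eval a)).mpr h1
    rw [Multiset.mem_toFinset, mem_roots hgK0]
    exact h2
  have hdiv : ∀ a ∈ S, (a /ₘ P).degree < P.degree := by
    rintro a ⟨hdeg', _⟩
    by_cases h : P.degree ≤ a.degree
    · have h1 : P.degree + (a /ₘ P).degree = a.degree := degree_add_divByMonic hPm h
      have h2 : P.degree + (a /ₘ P).degree < P.degree + P.degree := by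
        rw [h1, ← hdegP2]; exact hdeg'
      exact (WithBot.add_lt_add_iff_left (by
        rw [degree_eq_natDegree hP0]; exact WithBot.coe_ne_bot)).mp h2
    · rw [(divByMonic_eq_zero_iff hPm).mpr (not_le.mp h), degree_zero]
      rw [degree_eq_natDegree hP0]
      exact WithBot.bot_lt_coe _
  set T := {x // x ∈ gK.roots.toFinset} × {b // b ∈ degreeLT Fq P.natDegree} with hT
  have hmemLT : ∀ a ∈ S, a /ₘ P ∈ degreeLT Fq P.natDegree := by
    intro a ha
    rw [mem_degreeLT, ← degree_eq_natDegree hP0]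
    exact hdiv a ha
  set F : S → T := fun a => (⟨φ a.1, hmem a.1 a.2⟩, ⟨a.1 /ₘ P, hmemLT a.1 a.2⟩) with hF
  have hFinj : Function.Injective F := by
    rintro ⟨a, ha⟩ ⟨b, hb⟩ h
    rw [Prod.ext_iff, Subtype.ext_iff, Subtype.ext_iff] at h
    obtain ⟨h1, h2⟩ := h
    simp only [hF] at h1 h2
    have hPdvd : P ∣ a - b := by
      rw [hφ, Ideal.Quotient.mk_eq_mk_iff_sub_mem, hI, Ideal.mem_span_singleton] at h1
      exact h1
    have hab : a - b = a %ₘ P - b %ₘ P := by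
      conv_lhs => rw [← modByMonic_add_div a P, ← modByMonic_add_div b P]
      rw [h2]; ring
    have hmod : a %ₘ P - b %ₘ P = 0 := by
      refine eq_zero_of_dvd_of_degree_lt (hab ▸ hPdvd) ?_
      exact lt_of_le_of_lt (degree_sub_le _ _)
        (max_lt (degree_modByMonic_lt a hPm) (degree_modByMonic_lt b hPm))
    have : a = b := by
      rw [← modByMonic_add_div a P, ← modByMonic_add_div b P, h2,
        sub_eq_zero.mp hmod]
    exact Subtype.ext this
  haveI : Finite {b // b ∈ degreeLT Fq P.natDegree} :=
    Finite.of_equiv _ (degreeLTEquiv Fq P.natDegree).toEquiv.symm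
  haveI : Finite T := by rw [hT]; infer_instance
  have hcard : Nat.card S ≤ Nat.card T := Nat.card_le_card_of_injective F hFinj
  have hTcard : Nat.card T = gK.roots.toFinset.card * Fintype.card Fq ^ P.natDegree := by
    rw [hT, Nat.card_prod]
    congr 1
    · rw [Nat.card_eq_fintype_card, Fintype.card_coe]
    · rw [Nat.card_congr (degreeLTEquiv Fq P.natDegree).toEquiv, Nat.card_eq_fintype_card]
      simp [Fintype.card_fun]
  calc S.ncard = Nat.card S := (Nat.card_coe_set_eq S).symm
    _ ≤ Nat.card T := hcard
    _ = gK.roots.toFinset.card * Fintype.card Fq ^ P.natDegree := hTcard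
    _ ≤ k * Fintype.card Fq ^ P.natDegree := Nat.mul_le_mul_right _ hroots
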